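/- Let Q be a quiver of extended Dynkin (tame) type. The quadratic form q_Q(α) = Σ_{x∈Q₀} α(x)² − Σ_{a∈Q₁} α(ta)α(ha) is positive semidefinite on ℤ^{Q₀}. -/

import Mathlib

/-- The underlying (multi)graph of a quiver matches the graph with vertices
{0,…,k−1} and edge list E. -/
def MatchesGraphN {Q0 Q1 : Type*} (t h : Q1 → Q0) (k : ℕ) (E : List (ℕ × ℕ)) : Prop :=
  ∃ e0 : Q0 → ℕ, Function.Injective e0 ∧ Set.range e0 = {m | m < k} ∧
    ∃ e1 : Q1 ≃ Fin E.length, ∀ a : Q1,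
      E.get (e1 a) = (e0 (t a), e0 (h a)) ∨ E.get (e1 a) = (e0 (h a), e0 (t a))

/-- Edge list of the extended Dynkin graph Ã_n (a cycle with n+1 vertices). -/
def edgesAtilde (n : ℕ) : List (ℕ × ℕ) :=
  ((List.range n).map (fun i => (i, i + 1))) ++ [(n, 0)]

/-- Edge list of the extended Dynkin graph D̃_n (n+1 vertices, n ≥ 4). -/
def edgesDtilde (n : ℕ) : List (ℕ × ℕ) :=
  [(0, 2), (1, 2)] ++ ((List.range (n - 4)).map (fun i => (i + 2, i + 3)))
    ++ [(n - 2, n - 1), (n - 2, n)]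

/-- Edge list of the extended Dynkin graph Ẽ₆ (7 vertices). -/
def edgesE6 : List (ℕ × ℕ) := [(0, 1), (1, 2), (0, 3), (3, 4), (0, 5), (5, 6)]

/-- Edge list of the extended Dynkin graph Ẽ₇ (8 vertices). -/
def edgesE7 : List (ℕ × ℕ) := [(0, 1), (1, 2), (2, 3), (3, 4), (4, 5), (5, 6), (3, 7)]

/-- Edge list of the extended Dynkin graph Ẽ₈ (9 vertices). -/
def edgesE8 : List (ℕ × ℕ) :=
  [(0, 1), (1, 2), (2, 3), (3, 4), (4, 5), (5, 6), (6, 7), (2, 8)]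

/-- A quiver is of extended Dynkin (tame) type if its underlying graph is of type
Ã_n (n ≥ 1), D̃_n (n ≥ 4), Ẽ₆, Ẽ₇ or Ẽ₈. -/
def IsExtendedDynkin {Q0 Q1 : Type*} (t h : Q1 → Q0) : Prop :=
  (∃ n, 1 ≤ n ∧ MatchesGraphN t h (n + 1) (edgesAtilde n)) ∨
  (∃ n, 4 ≤ n ∧ MatchesGraphN t h (n + 1) (edgesDtilde n)) ∨
  MatchesGraphN t h 7 edgesE6 ∨ MatchesGraphN t h 8 edgesE7 ∨ MatchesGraphN t h 9 edgesE8

section TitsFormAux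


lemma lsum_smul {X : Type*} (l : List X) (c : ℚ) (f : X → ℚ) :
    (l.map (fun x => c * f x)).sum = c * (l.map f).sum := by
  induction l with
  | nil => simp
  | cons a l ih => simp [ih]; ring

lemma lsum_sub {X : Type*} (l : List X) (f g : X → ℚ) :
    (l.map (fun x => f x - g x)).sum = (l.map f).sum - (l.map g).sum := by
  induction l with
  | nil => simp
  | cons a l ih => simp [ih]; ring

lemma lsum_swap {X I : Type*} (l : List X) (s : Finset I) (F : I → X → ℚ) :
    ∑ m ∈ s, (l.map (F m)).sum = (l.map (fun x => ∑ m ∈ s, F m x)).sum := by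
  induction l with
  | nil => simp
  | cons a l ih => simp [Finset.sum_add_distrib, ih]

lemma lsum_get {X : Type*} (l : List X) (f : X → ℚ) :
    (l.map f).sum = ∑ i : Fin l.length, f (l.get i) := by
  rw [← Fin.sum_univ_getElem (l.map f)]
  apply Fintype.sum_equiv (finCongr (by simp))
  intro i
  simp

lemma list_range_sum (n : ℕ) (f : ℕ → ℚ) :
    ((List.range n).map f).sum = ∑ i ∈ Finset.range n, f i := by
  induction n with
  | zero => simp
  | succ n ih => simp [List.range_succ, Finset.sum_range_succ, ih]

lemma sum_ind (n a m : ℕ) (c : ℚ) :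
    (∑ i ∈ Finset.range n, if i + a = m then c else 0)
      = if a ≤ m ∧ m < n + a then c else 0 := by
  induction n with
  | zero =>
    simp only [Finset.sum_range_zero]
    split_ifs with hcond
    · exfalso; omega
    · rfl
  | succ n ih =>
    rw [Finset.sum_range_succ, ih]
    split_ifs <;> first | (exfalso; omega) | ring

lemma keyQ (k : ℕ) (E : List (ℕ × ℕ)) (δ : ℕ → ℚ)
    (hδ : ∀ m, m < k → 0 < δ m)
    (hE : ∀ e ∈ E, e.1 < k ∧ e.2 < k)
    (hc : ∀ m, m < k →
      (E.map (fun e => (if e.1 = m then δ e.2 else 0) + (if e.2 = m then δ e.1 else 0))).sum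
        ≤ 2 * δ m)
    (β : ℕ → ℚ) :
    0 ≤ (∑ m ∈ Finset.range k, β m ^ 2) - (E.map (fun e => β e.1 * β e.2)).sum := by
  set T : ℕ × ℕ → ℚ :=
    fun e => (δ e.2 / δ e.1) * β e.1 ^ 2 + (δ e.1 / δ e.2) * β e.2 ^ 2 with hT
  have stepA : ∑ m ∈ Finset.range k, (β m ^ 2 / δ m) *
      (E.map (fun e => (if e.1 = m then δ e.2 else 0) + (if e.2 = m then δ e.1 else 0))).sum
      = (E.map T).sum := by
    have h1 : ∀ m ∈ Finset.range k, (β m ^ 2 / δ m) *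
        (E.map (fun e => (if e.1 = m then δ e.2 else 0) + (if e.2 = m then δ e.1 else 0))).sum
        = (E.map (fun e => (β m ^ 2 / δ m) *
            ((if e.1 = m then δ e.2 else 0) + (if e.2 = m then δ e.1 else 0)))).sum := by
      intro m _
      rw [lsum_smul]
    rw [Finset.sum_congr rfl h1, lsum_swap]
    apply congrArg List.sum
    apply List.map_congr_left
    intro e he
    obtain ⟨he1, he2⟩ := hE e he
    have d1 := (hδ _ he1).ne'
    have d2 := (hδ _ he2).ne'
    simp only [mul_add, Finset.sum_add_distrib, mul_ite, mul_zero]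
    rw [Finset.sum_ite_eq (Finset.range k) e.1 (fun m => β m ^ 2 / δ m * δ e.2),
        Finset.sum_ite_eq (Finset.range k) e.2 (fun m => β m ^ 2 / δ m * δ e.1)]
    rw [if_pos (Finset.mem_range.mpr he1), if_pos (Finset.mem_range.mpr he2), hT]
    ring
  have stepB : (E.map T).sum ≤ 2 * ∑ m ∈ Finset.range k, β m ^ 2 := by
    rw [← stepA, Finset.mul_sum]
    apply Finset.sum_le_sum
    intro m hm
    have hm' := Finset.mem_range.mp hm
    have hpos := hδ m hm'
    calc (β m ^ 2 / δ m) * (E.map _).sum ≤ (β m ^ 2 / δ m) * (2 * δ m) := by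
          apply mul_le_mul_of_nonneg_left (hc m hm')
          positivity
      _ = 2 * β m ^ 2 := by field_simp
  have stepC : 0 ≤ (E.map (fun e => T e - 2 * (β e.1 * β e.2))).sum := by
    apply List.sum_nonneg
    intro x hx
    obtain ⟨e, he, rfl⟩ := List.mem_map.mp hx
    obtain ⟨he1, he2⟩ := hE e he
    have d1 := hδ _ he1
    have d2 := hδ _ he2
    have key : T e - 2 * (β e.1 * β e.2)
        = (δ e.2 * β e.1 - δ e.1 * β e.2) ^ 2 / (δ e.1 * δ e.2) := by
      rw [hT]
      field_simp
      ring
    rw [key]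
    positivity
  have stepD : (E.map (fun e => T e - 2 * (β e.1 * β e.2))).sum
      = (E.map T).sum - 2 * (E.map (fun e => β e.1 * β e.2)).sum := by
    rw [lsum_sub, lsum_smul]
  linarith [stepC, stepB, stepD.symm ▸ stepC]

lemma reduce {Q0 Q1 : Type*} [Fintype Q0] [Fintype Q1] (t h : Q1 → Q0)
    (k : ℕ) (E : List (ℕ × ℕ)) (hm : MatchesGraphN t h k E) (α : Q0 → ℤ)
    (key : ∀ β : ℕ → ℚ,
      0 ≤ (∑ m ∈ Finset.range k, β m ^ 2) - (E.map (fun e => β e.1 * β e.2)).sum) :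
    0 ≤ (∑ x, α x ^ 2) - ∑ a, α (t a) * α (h a) := by
  classical
  obtain ⟨e0, hinj, hrange, e1, he⟩ := hm
  set β : ℕ → ℚ := fun m => if hx : ∃ x, e0 x = m then (α hx.choose : ℚ) else 0 with hβdef
  have hβ : ∀ x, β (e0 x) = (α x : ℚ) := by
    intro x
    have hx : ∃ y, e0 y = e0 x := ⟨x, rfl⟩
    simp only [hβdef, dif_pos hx]
    rw [hinj hx.choose_spec]
  have himg : Finset.image e0 Finset.univ = Finset.range k := by
    ext m
    have h2 := Set.ext_iff.mp hrange m
    simp only [Set.mem_range, Set.mem_setOf_eq] at h2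
    simp only [Finset.mem_image, Finset.mem_range, Finset.mem_univ, true_and]
    exact h2
  have hsum1 : ∑ m ∈ Finset.range k, β m ^ 2 = ∑ x, (α x : ℚ) ^ 2 := by
    rw [← himg, Finset.sum_image (fun x _ y _ hxy => hinj hxy)]
    exact Finset.sum_congr rfl fun x _ => by rw [hβ]
  have hsum2 : (E.map (fun e => β e.1 * β e.2)).sum
      = ∑ a, (α (t a) : ℚ) * α (h a) := by
    rw [lsum_get, ← Equiv.sum_comp e1 (fun i => β (E.get i).1 * β (E.get i).2)]
    apply Finset.sum_congr rfl
    intro a _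
    rcases he a with hcase | hcase <;> rw [hcase] <;> simp only [hβ]
    ring
  have := key β
  rw [hsum1, hsum2] at this
  have goalQ : (0 : ℚ) ≤ ((∑ x, α x ^ 2) - ∑ a, α (t a) * α (h a) : ℤ) := by
    push_cast
    convert this using 2
  exact_mod_cast goalQ

lemma keyA (n : ℕ) (hn : 1 ≤ n) (β : ℕ → ℚ) :
    0 ≤ (∑ m ∈ Finset.range (n + 1), β m ^ 2)
      - ((edgesAtilde n).map (fun e => β e.1 * β e.2)).sum := by
  apply keyQ (n + 1) _ (fun _ => 1)
  · intro m _; norm_num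
  · intro e he
    simp only [edgesAtilde, List.mem_append, List.mem_map, List.mem_range,
      List.mem_singleton] at he
    rcases he with ⟨i, hi, rfl⟩ | rfl <;> constructor <;> simp <;> omega
  · intro m hm
    simp only [edgesAtilde, List.map_append, List.map_map, List.sum_append]
    rw [list_range_sum]
    simp only [Function.comp]
    rw [Finset.sum_add_distrib, Finset.sum_ite_eq' (Finset.range n) m (fun _ => (1:ℚ)),
      sum_ind n 1 m 1]
    simp only [List.map_cons, List.map_nil, List.sum_cons, List.sum_nil,
      Finset.mem_range]
    split_ifs <;> first | (exfalso; omega) | norm_num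

lemma keyD (n : ℕ) (hn : 4 ≤ n) (β : ℕ → ℚ) :
    0 ≤ (∑ m ∈ Finset.range (n + 1), β m ^ 2)
      - ((edgesDtilde n).map (fun e => β e.1 * β e.2)).sum := by
  set δ : ℕ → ℚ := fun m => if 2 ≤ m ∧ m ≤ n - 2 then 2 else 1 with hδdef
  have hδval : ∀ m, δ m = if 2 ≤ m ∧ m ≤ n - 2 then 2 else 1 := fun m => rfl
  apply keyQ (n + 1) _ δ
  · intro m _; rw [hδval]; split_ifs <;> norm_num
  · intro e he
    simp only [edgesDtilde, List.mem_append, List.mem_map, List.mem_range,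
      List.mem_cons, List.mem_singleton, List.not_mem_nil, or_false] at he
    rcases he with ((rfl | rfl) | ⟨i, hi, rfl⟩) | rfl | rfl <;> constructor <;> simp <;> omega
  · intro m hm
    set f : ℕ × ℕ → ℚ :=
      fun e => (if e.1 = m then δ e.2 else 0) + (if e.2 = m then δ e.1 else 0) with hfdef
    have e0 : δ 0 = 1 := by rw [hδval]; simp
    have e1 : δ 1 = 1 := by rw [hδval]; split_ifs <;> first | (exfalso; omega) | rfl
    have e2 : δ 2 = 2 := by rw [hδval]; rw [if_pos (show 2 ≤ 2 ∧ 2 ≤ n - 2 by omega)]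
    have eN2 : δ (n - 2) = 2 := by
      rw [hδval]; rw [if_pos (show 2 ≤ n - 2 ∧ n - 2 ≤ n - 2 by omega)]
    have eN1 : δ (n - 1) = 1 := by
      rw [hδval]; split_ifs <;> first | (exfalso; omega) | rfl
    have eN : δ n = 1 := by
      rw [hδval]; split_ifs <;> first | (exfalso; omega) | rfl
    have expand : ((edgesDtilde n).map f).sum
        = f (0, 2) + f (1, 2)
          + ((List.range (n - 4)).map (fun i => f (i + 2, i + 3))).sum
          + f (n - 2, n - 1) + f (n - 2, n) := by
      simp only [edgesDtilde, List.map_append, List.map_map, List.sum_append,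
        List.map_cons, List.map_nil, List.sum_cons, List.sum_nil, Function.comp_def]
      ring
    have hchain : ∀ i ∈ Finset.range (n - 4),
        f (i + 2, i + 3) = ((if i + 2 = m then (2:ℚ) else 0) + if i + 3 = m then (2:ℚ) else 0) := by
      intro i hi
      rw [Finset.mem_range] at hi
      have d3 : δ (i + 3) = 2 := by
        rw [hδval]; rw [if_pos (show 2 ≤ i + 3 ∧ i + 3 ≤ n - 2 by omega)]
      have d2' : δ (i + 2) = 2 := by
        rw [hδval]; rw [if_pos (show 2 ≤ i + 2 ∧ i + 2 ≤ n - 2 by omega)]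
      rw [hfdef]
      simp only
      rw [d3, d2']
    rw [expand, list_range_sum, Finset.sum_congr rfl hchain, Finset.sum_add_distrib,
      sum_ind (n - 4) 2 m 2, sum_ind (n - 4) 3 m 2]
    rw [hfdef]
    simp only
    rw [e0, e1, e2, eN2, eN1, eN, hδval m]
    split_ifs <;> first | (exfalso; omega) | norm_num

def deltaE6 : ℕ → ℚ := fun m =>
  if m = 0 then 3 else if m = 1 then 2 else if m = 2 then 1 else if m = 3 then 2
  else if m = 4 then 1 else if m = 5 then 2 else 1

def deltaE7 : ℕ → ℚ := fun m =>
  if m = 0 then 1 else if m = 1 then 2 else if m = 2 then 3 else if m = 3 then 4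
  else if m = 4 then 3 else if m = 5 then 2 else if m = 6 then 1 else 2

def deltaE8 : ℕ → ℚ := fun m =>
  if m = 0 then 2 else if m = 1 then 4 else if m = 2 then 6 else if m = 3 then 5
  else if m = 4 then 4 else if m = 5 then 3 else if m = 6 then 2 else if m = 7 then 1
  else 3


lemma keyE6 (β : ℕ → ℚ) :
    0 ≤ (∑ m ∈ Finset.range 7, β m ^ 2)
      - (edgesE6.map (fun e => β e.1 * β e.2)).sum := by
  apply keyQ 7 _ deltaE6
  · intro m _; unfold deltaE6; split_ifs <;> norm_num
  · intro e he; fin_cases he <;> norm_num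
  · intro m hm; interval_cases m <;> norm_num [edgesE6, deltaE6]

lemma keyE7 (β : ℕ → ℚ) :
    0 ≤ (∑ m ∈ Finset.range 8, β m ^ 2)
      - (edgesE7.map (fun e => β e.1 * β e.2)).sum := by
  apply keyQ 8 _ deltaE7
  · intro m _; unfold deltaE7; split_ifs <;> norm_num
  · intro e he; fin_cases he <;> norm_num
  · intro m hm; interval_cases m <;> norm_num [edgesE7, deltaE7]

lemma keyE8 (β : ℕ → ℚ) :
    0 ≤ (∑ m ∈ Finset.range 9, β m ^ 2)
      - (edgesE8.map (fun e => β e.1 * β e.2)).sum := by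
  apply keyQ 9 _ deltaE8
  · intro m _; unfold deltaE8; split_ifs <;> norm_num
  · intro e he; fin_cases he <;> norm_num
  · intro m hm; interval_cases m <;> norm_num [edgesE8, deltaE8]

end TitsFormAux

/-- For a quiver Q of extended Dynkin (tame) type, the Tits quadratic form
q_Q(α) = Σ_x α(x)² − Σ_a α(ta)α(ha) is positive semidefinite on ℤ^{Q₀}. -/
theorem stmt15 {Q0 Q1 : Type*} [Fintype Q0] [Fintype Q1] (t h : Q1 → Q0)
    (htame : IsExtendedDynkin t h) (α : Q0 → ℤ) :
    0 ≤ (∑ x, α x ^ 2) - ∑ a, α (t a) * α (h a) := by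
  rcases htame with ⟨n, hn, hmatch⟩ | ⟨n, hn, hmatch⟩ | hmatch | hmatch | hmatch
  · exact reduce t h _ _ hmatch α (keyA n hn)
  · exact reduce t h _ _ hmatch α (keyD n hn)
  · exact reduce t h _ _ hmatch α keyE6
  · exact reduce t h _ _ hmatch α keyE7
  · exact reduce t h _ _ hmatch α keyE8
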